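/- Let T, k be positive integers, ℓ > 0 real, and (aₜ)_{t∈[T]} natural numbers summing to T·k. Suppose that for each t with aₜ = k at least ℓ/2 elements in block t are uncovered, and for each t with aₜ < k at least (k − aₜ)·ℓ elements in block t are uncovered. Then the total number of uncovered elements is at least T·ℓ/2. -/
import Mathlib

open Finset

/-- Final soundness computation: the total number of uncovered elements is at
least T·ℓ/2. -/
theorem stmt_16 (T k : ℕ) (hT : 0 < T) (hk : 0 < k) (ℓ : ℝ) (hℓ : 0 < ℓ)
    (a : Fin T → ℕ) (hsum : ∑ t, a t = T * k)
    (u : Fin T → ℝ) (hu0 : ∀ t, 0 ≤ u t)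
    (heq : ∀ t, a t = k → u t ≥ ℓ / 2)
    (hlt : ∀ t, a t < k → u t ≥ ((k : ℝ) - a t) * ℓ) :
    ∑ t, u t ≥ T * ℓ / 2 := by
  have key : ∀ t, u t ≥ ℓ / 2 + ℓ / 2 * ((k : ℝ) - a t) := by
    intro t
    rcases lt_trichotomy (a t) k with h | h | h
    · have := hlt t h
      have hk1 : (1 : ℝ) ≤ (k : ℝ) - a t := by
        have : a t + 1 ≤ k := h
        have := (Nat.cast_le (α := ℝ)).mpr this
        push_cast at this ⊢
        linarith
      nlinarith
    · have := heq t h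
      rw [h]
      simp
      linarith
    · have := hu0 t
      have hk1 : (k : ℝ) - a t ≤ -1 := by
        have : k + 1 ≤ a t := h
        have := (Nat.cast_le (α := ℝ)).mpr this
        push_cast at this ⊢
        linarith
      nlinarith
  have hsum' : ∑ t, u t ≥ ∑ t, (ℓ / 2 + ℓ / 2 * ((k : ℝ) - a t)) :=
    Finset.sum_le_sum fun t _ => key t
  have hc : (∑ t, (a t : ℝ)) = T * k := by
    rw [← Nat.cast_sum, hsum]; push_cast; ring
  have hval : ∑ t, (ℓ / 2 + ℓ / 2 * ((k : ℝ) - a t)) = T * ℓ / 2 := by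
    rw [Finset.sum_add_distrib, Finset.sum_const, ← Finset.mul_sum,
      Finset.sum_sub_distrib, Finset.sum_const, hc]
    simp [Finset.card_univ]
    ring
  linarith [hsum', hval.ge]
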